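/- Let Γ be a finite connected multigraph with legs, r ≥ 1, leg values a_i ∈ ℤ/rℤ and vertex values δ : V → ℤ/rℤ, and let e = (h, h') be a separating edge. Let Γ̄ be the graph obtained by contracting e, with the merged vertex assigned value δ(u) + δ(v). Then restriction of weightings to the half-edges of Γ̄ defines a bijection from the set of weightings mod r of (Γ, a, δ) to the set of weightings mod r of (Γ̄, a, δ̄). -/
import Mathlib
lemma aux_sum_subtype {H M : Type} [Fintype H] [AddCommMonoid M]
    (q p : H → Prop) [DecidablePred q] [DecidablePred p] (f : H → M) :
    ∑ h ∈ Finset.univ.filter (fun h : {h // q h} => p h.1), f h.1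
      = ∑ h ∈ Finset.univ.filter (fun h => q h ∧ p h), f h := by
  rw [Finset.sum_filter, ← Finset.sum_subtype (Finset.univ.filter q) (by simp)
    (fun h => if p h then f h else 0), ← Finset.filter_filter, Finset.sum_filter,
    ← Finset.sum_filter, ← Finset.sum_filter]

lemma sum_split {H V M : Type} [Fintype H] [DecidableEq H] [DecidableEq V] [AddCommMonoid M]
    (vertexOf : H → V) (h₀ h₁ : H) (hne : h₀ ≠ h₁) (w : H → M) (x : V) :
    ∑ h ∈ Finset.univ.filter (fun h => vertexOf h = x), w h
      = (∑ h ∈ Finset.univ.filter (fun h => (h ≠ h₀ ∧ h ≠ h₁) ∧ vertexOf h = x), w h)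
        + ((if vertexOf h₀ = x then w h₀ else 0) + (if vertexOf h₁ = x then w h₁ else 0)) := by
  rw [← Finset.sum_filter_add_sum_filter_not (Finset.univ.filter fun h => vertexOf h = x)
    (fun h => h ≠ h₀ ∧ h ≠ h₁) w]
  congr 1
  · apply Finset.sum_congr _ (fun _ _ => rfl)
    ext h
    simp only [Finset.mem_filter, Finset.mem_univ, true_and]
    tauto
  · have e : (Finset.univ.filter fun h => vertexOf h = x).filter (fun h => ¬(h ≠ h₀ ∧ h ≠ h₁))
        = ({h₀, h₁} : Finset H).filter fun h => vertexOf h = x := by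
      ext h
      simp only [Finset.mem_filter, Finset.mem_univ, true_and, Finset.mem_insert,
        Finset.mem_singleton, not_and_or, not_not]
      tauto
    rw [e, Finset.sum_filter, Finset.sum_pair hne]

lemma sum_or_split {α V M : Type} [Fintype α] [DecidableEq α] [DecidableEq V] [AddCommMonoid M]
    (g : α → V) (f : α → M) (u v : V) (huv : u ≠ v) :
    ∑ x ∈ Finset.univ.filter (fun x => g x = u ∨ g x = v), f x
      = (∑ x ∈ Finset.univ.filter (fun x => g x = u), f x)
        + ∑ x ∈ Finset.univ.filter (fun x => g x = v), f x := by
  rw [Finset.filter_or, Finset.sum_union]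
  rw [Finset.disjoint_left]
  rintro x hx hx'
  simp only [Finset.mem_filter, Finset.mem_univ, true_and] at hx hx'
  exact huv (hx ▸ hx')



/-- The involution induced on the half-edges of the graph obtained by deleting the edge
`{h₀, ι h₀}`. -/
def contractedInv {H : Type} (ι : H → H) (hinv : ∀ h, ι (ι h) = h) (h₀ : H)
    (h : {h : H // h ≠ h₀ ∧ h ≠ ι h₀}) : {h : H // h ≠ h₀ ∧ h ≠ ι h₀} :=
  ⟨ι h.1, by
    constructor
    · intro e
      exact h.2.2 (by rw [← hinv h.1, e])
    · intro e
      have : h.1 = h₀ := by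
        have h' := congrArg ι e
        rwa [hinv, hinv] at h'
      exact h.2.1 this⟩

/-- Contracting a separating edge induces a bijection on weightings mod `r`
(proof of Proposition 3.4 of the paper).

Graph model: finite vertex set `V`, half-edges `H` with fixed-point free involution `ι`,
vertex map `vertexOf`, legs via `legvertex` with values `a`, vertex values `δ`.  Let
`e = (h₀, ι h₀)` be a separating edge, with `V₁` the component of `vertexOf (ι h₀)` after
removing `e`.  The contracted graph `Γ̄` has half-edges `{h // h ≠ h₀ ∧ h ≠ ι h₀}`, the
same vertices except that the endpoints `u = vertexOf h₀` and `v = vertexOf (ι h₀)` of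
`e` are merged into one vertex carrying the value `δ u + δ v`.  Restriction of weightings
to the remaining half-edges is a bijection from the weightings mod `r` of `Γ` onto the
weightings mod `r` of `Γ̄`. -/
theorem weightings_restriction_bijOn_of_separating_edge
    (V H : Type) [Fintype V] [Fintype H] [DecidableEq V] [DecidableEq H]
    (n r : ℕ) (hr : 1 ≤ r)
    (vertexOf : H → V) (ι : H → H)
    (hinv : ∀ h, ι (ι h) = h) (hnofix : ∀ h, ι h ≠ h)
    (legvertex : Fin n → V)
    (hconn : ∀ u v : V, Relation.ReflTransGen
      (fun x y => ∃ h, vertexOf h = x ∧ vertexOf (ι h) = y) u v)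
    (a : Fin n → ZMod r) (δ : V → ZMod r)
    (h₀ : H) (V₁ : Finset V)
    (hin : vertexOf (ι h₀) ∈ V₁) (hout : vertexOf h₀ ∉ V₁)
    (hsep : ∀ h : H, h ≠ h₀ → h ≠ ι h₀ → (vertexOf h ∈ V₁ ↔ vertexOf (ι h) ∈ V₁)) :
    Set.BijOn
      (fun (w : H → ZMod r) (h : {h : H // h ≠ h₀ ∧ h ≠ ι h₀}) => w h.1)
      {w : H → ZMod r |
        (∀ h, w (ι h) = - w h) ∧
        ∀ x : V, (∑ h ∈ Finset.univ.filter (fun h => vertexOf h = x), w h)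
          + (∑ i ∈ Finset.univ.filter (fun i => legvertex i = x), a i) = δ x}
      {w' : {h : H // h ≠ h₀ ∧ h ≠ ι h₀} → ZMod r |
        (∀ h, w' (contractedInv ι hinv h₀ h) = - w' h) ∧
        (∀ x : V, x ≠ vertexOf h₀ → x ≠ vertexOf (ι h₀) →
          (∑ h ∈ Finset.univ.filter
              (fun h : {h : H // h ≠ h₀ ∧ h ≠ ι h₀} => vertexOf h.1 = x), w' h)
            + (∑ i ∈ Finset.univ.filter (fun i => legvertex i = x), a i) = δ x) ∧
        ((∑ h ∈ Finset.univ.filter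
              (fun h : {h : H // h ≠ h₀ ∧ h ≠ ι h₀} =>
                vertexOf h.1 = vertexOf h₀ ∨ vertexOf h.1 = vertexOf (ι h₀)), w' h)
          + (∑ i ∈ Finset.univ.filter
              (fun i => legvertex i = vertexOf h₀ ∨ legvertex i = vertexOf (ι h₀)), a i)
          = δ (vertexOf h₀) + δ (vertexOf (ι h₀)))} := by
  have huv : vertexOf h₀ ≠ vertexOf (ι h₀) := fun e => hout (e ▸ hin)
  have hne : h₀ ≠ ι h₀ := fun e => hnofix h₀ e.symm
  have hι₀ : ι h₀ ≠ h₀ := hnofix h₀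
  refine ⟨?_, ?_, ?_⟩
  · -- MapsTo
    rintro w ⟨hw, hvert⟩
    refine ⟨fun h => hw h.1, fun x hxu hxv => ?_, ?_⟩
    · rw [aux_sum_subtype (fun h => h ≠ h₀ ∧ h ≠ ι h₀) (fun h => vertexOf h = x) w]
      have E := hvert x
      rw [sum_split vertexOf h₀ (ι h₀) hne w x, if_neg (fun e => hxu e.symm),
        if_neg (fun e => hxv e.symm), add_zero, add_zero] at E
      exact E
    · rw [sum_or_split (fun h : {h : H // h ≠ h₀ ∧ h ≠ ι h₀} => vertexOf h.1)
        (fun h => w h.1) _ _ huv,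
        aux_sum_subtype (fun h => h ≠ h₀ ∧ h ≠ ι h₀) (fun h => vertexOf h = vertexOf h₀) w,
        aux_sum_subtype (fun h => h ≠ h₀ ∧ h ≠ ι h₀) (fun h => vertexOf h = vertexOf (ι h₀)) w,
        sum_or_split legvertex a _ _ huv]
      have Eu := hvert (vertexOf h₀)
      rw [sum_split vertexOf h₀ (ι h₀) hne w (vertexOf h₀), if_pos rfl,
        if_neg (Ne.symm huv), add_zero] at Eu
      have Ev := hvert (vertexOf (ι h₀))
      rw [sum_split vertexOf h₀ (ι h₀) hne w (vertexOf (ι h₀)), if_neg huv,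
        if_pos rfl, zero_add, hw h₀] at Ev
      linear_combination Eu + Ev
  · -- InjOn
    rintro w₁ ⟨hw₁, hv₁⟩ w₂ ⟨hw₂, hv₂⟩ heq
    have hagree : ∀ h, h ≠ h₀ → h ≠ ι h₀ → w₁ h = w₂ h := fun h ha hb =>
      congrFun heq (⟨h, ha, hb⟩ : {h : H // h ≠ h₀ ∧ h ≠ ι h₀})
    have hpart : (∑ h ∈ Finset.univ.filter
          (fun h => (h ≠ h₀ ∧ h ≠ ι h₀) ∧ vertexOf h = vertexOf (ι h₀)), w₁ h)
        = ∑ h ∈ Finset.univ.filter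
          (fun h => (h ≠ h₀ ∧ h ≠ ι h₀) ∧ vertexOf h = vertexOf (ι h₀)), w₂ h := by
      refine Finset.sum_congr rfl fun h hh => ?_
      simp only [Finset.mem_filter, Finset.mem_univ, true_and] at hh
      exact hagree h hh.1.1 hh.1.2
    have E₁ := hv₁ (vertexOf (ι h₀))
    rw [sum_split vertexOf h₀ (ι h₀) hne w₁ (vertexOf (ι h₀)), if_neg huv,
      if_pos rfl, zero_add] at E₁
    have E₂ := hv₂ (vertexOf (ι h₀))
    rw [sum_split vertexOf h₀ (ι h₀) hne w₂ (vertexOf (ι h₀)), if_neg huv,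
      if_pos rfl, zero_add] at E₂
    have key : w₁ (ι h₀) = w₂ (ι h₀) := by linear_combination E₁ - E₂ - hpart
    funext h
    by_cases ha : h = h₀
    · rw [ha]
      have e₁ : w₁ h₀ = - w₁ (ι h₀) := by
        have := hw₁ (ι h₀); rwa [hinv] at this
      have e₂ : w₂ h₀ = - w₂ (ι h₀) := by
        have := hw₂ (ι h₀); rwa [hinv] at this
      rw [e₁, e₂, key]
    · by_cases hb : h = ι h₀
      · rw [hb]; exact key
      · exact hagree h ha hb
  · -- SurjOn
    rintro w' ⟨hw', hv', hmerge⟩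
    set wv : ZMod r := δ (vertexOf (ι h₀))
        - (∑ i ∈ Finset.univ.filter (fun i => legvertex i = vertexOf (ι h₀)), a i)
        - (∑ h ∈ Finset.univ.filter
            (fun h : {h : H // h ≠ h₀ ∧ h ≠ ι h₀} => vertexOf h.1 = vertexOf (ι h₀)), w' h)
      with hwv
    set w : H → ZMod r := fun h =>
      if hc : h ≠ h₀ ∧ h ≠ ι h₀ then w' ⟨h, hc⟩ else if h = h₀ then -wv else wv with hwdef
    have hres : ∀ h : {h : H // h ≠ h₀ ∧ h ≠ ι h₀}, w h.1 = w' h := fun h => dif_pos h.2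
    have hwh0 : w h₀ = -wv := by
      rw [hwdef]; simp
    have hwi0 : w (ι h₀) = wv := by
      rw [hwdef]
      simp only [dif_neg (show ¬((ι h₀ : H) ≠ h₀ ∧ (ι h₀ : H) ≠ ι h₀) by simp)]
      rw [if_neg hι₀]
    have hpart : ∀ y : V, (∑ h ∈ Finset.univ.filter
          (fun h => (h ≠ h₀ ∧ h ≠ ι h₀) ∧ vertexOf h = y), w h)
        = ∑ h ∈ Finset.univ.filter
          (fun h : {h : H // h ≠ h₀ ∧ h ≠ ι h₀} => vertexOf h.1 = y), w' h := by
      intro y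
      rw [← aux_sum_subtype (fun h => h ≠ h₀ ∧ h ≠ ι h₀) (fun h => vertexOf h = y) w]
      exact Finset.sum_congr rfl fun h _ => hres h
    refine ⟨w, ⟨?_, ?_⟩, funext fun h => hres h⟩
    · intro h
      by_cases hc : h ≠ h₀ ∧ h ≠ ι h₀
      · have hc' : ι h ≠ h₀ ∧ ι h ≠ ι h₀ :=
          (contractedInv ι hinv h₀ ⟨h, hc⟩).2
        have e1 : w (ι h) = w' (contractedInv ι hinv h₀ ⟨h, hc⟩) := dif_pos hc'
        rw [e1, hw' ⟨h, hc⟩, ← hres ⟨h, hc⟩]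
      · rw [not_and_or, not_not, not_not] at hc
        rcases hc with hc | hc
        · subst hc; rw [hwi0, hwh0, neg_neg]
        · subst hc; rw [hinv, hwh0, hwi0]
    · intro x
      rw [sum_split vertexOf h₀ (ι h₀) hne w x, hpart x]
      by_cases hxu : x = vertexOf h₀
      · subst hxu
        rw [if_pos rfl, if_neg (Ne.symm huv), add_zero, hwh0]
        have hm := hmerge
        rw [sum_or_split (fun h : {h : H // h ≠ h₀ ∧ h ≠ ι h₀} => vertexOf h.1)
            w' _ _ huv, sum_or_split legvertex a _ _ huv] at hm
        rw [hwv]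
        linear_combination hm
      · by_cases hxv : x = vertexOf (ι h₀)
        · subst hxv
          rw [if_neg huv, if_pos rfl, zero_add, hwi0, hwv]
          ring
        · rw [if_neg (fun e => hxu e.symm), if_neg (fun e => hxv e.symm),
            add_zero, add_zero]
          exact hv' x hxu hxv
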